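/- The graduated surrogate recovers the truncated least-squares loss in the limit: for every r ≥ 0 and c > 0, the infimum ρ_μ(r) = inf_{w ∈ [0,1]} ( w·r + μ(1−w)c²/(μ+w) ) converges to min(r, c²) as μ → ∞. -/

import Mathlib

open Filter Set

/-- The graduated surrogate recovers the truncated least-squares loss in the limit:
for every `r ≥ 0` and `c > 0`, the infimum over `w ∈ [0,1]` of
`w·r + μ(1−w)c²/(μ+w)` tends to `min r c²` as `μ → ∞`. -/
theorem gnc_surrogate_tendsto_tls (r c : ℝ) (hr : 0 ≤ r) (hc : 0 < c) :
    Filter.Tendsto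
      (fun μ : ℝ =>
        sInf ((fun w : ℝ => w * r + μ * (1 - w) * c ^ 2 / (μ + w)) '' Set.Icc 0 1))
      Filter.atTop (nhds (min r (c ^ 2))) := by
  have hc2 : (0:ℝ) < c ^ 2 := by positivity
  -- lower bound function
  have hlow : Tendsto (fun μ : ℝ => min r (c ^ 2 * (μ / (μ + 1)))) atTop
      (nhds (min r (c ^ 2))) := by
    have h1 : Tendsto (fun μ : ℝ => μ / (μ + 1)) atTop (nhds 1) := by
      have h2 : Tendsto (fun μ : ℝ => (μ + 1)⁻¹) atTop (nhds 0) :=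
        tendsto_inv_atTop_zero.comp (tendsto_atTop_add_const_right _ 1 tendsto_id)
      have h3 : Tendsto (fun μ : ℝ => 1 - (μ + 1)⁻¹) atTop (nhds 1) := by
        simpa using (tendsto_const_nhds.sub h2)
      refine h3.congr' ?_
      filter_upwards [eventually_gt_atTop (0:ℝ)] with μ hμ
      have : μ + 1 ≠ 0 := by linarith
      field_simp
      ring
    have h4 : Tendsto (fun μ : ℝ => c ^ 2 * (μ / (μ + 1))) atTop (nhds (c ^ 2 * 1)) :=
      tendsto_const_nhds.mul h1
    have h5 := (tendsto_const_nhds : Tendsto (fun _ : ℝ => r) atTop (nhds r)).min h4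
    simpa using h5
  refine tendsto_of_tendsto_of_tendsto_of_le_of_le' hlow tendsto_const_nhds ?_ ?_
  · -- lower bound on sInf
    filter_upwards [eventually_ge_atTop (1:ℝ)] with μ hμ
    refine le_csInf ⟨_, ⟨0, by simp, rfl⟩⟩ ?_
    rintro b ⟨w, ⟨hw0, hw1⟩, rfl⟩
    have hμw : (0:ℝ) < μ + w := by linarith
    have hμ1 : (0:ℝ) < μ + 1 := by linarith
    have hdiv : μ / (μ + 1) ≤ μ / (μ + w) :=
      div_le_div_of_nonneg_left (by linarith) hμw (by linarith)
    have key : (1 - w) * (c ^ 2 * (μ / (μ + 1))) ≤ μ * (1 - w) * c ^ 2 / (μ + w) := by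
      have h := mul_le_mul_of_nonneg_left hdiv
        (mul_nonneg (by linarith : (0:ℝ) ≤ 1 - w) hc2.le)
      calc (1 - w) * (c ^ 2 * (μ / (μ + 1))) = (1 - w) * c ^ 2 * (μ / (μ + 1)) := by ring
        _ ≤ (1 - w) * c ^ 2 * (μ / (μ + w)) := h
        _ = μ * (1 - w) * c ^ 2 / (μ + w) := by field_simp
    have hmin1 : min r (c ^ 2 * (μ / (μ + 1))) ≤ r := min_le_left _ _
    have hmin2 : min r (c ^ 2 * (μ / (μ + 1))) ≤ c ^ 2 * (μ / (μ + 1)) := min_le_right _ _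
    have : min r (c ^ 2 * (μ / (μ + 1))) ≤ w * r + (1 - w) * (c ^ 2 * (μ / (μ + 1))) := by
      nlinarith [mul_le_mul_of_nonneg_left hmin1 hw0,
        mul_le_mul_of_nonneg_left hmin2 (by linarith : (0:ℝ) ≤ 1 - w)]
    linarith
  · -- upper bound on sInf
    filter_upwards [eventually_ge_atTop (1:ℝ)] with μ hμ
    have hbdd : BddBelow ((fun w : ℝ => w * r + μ * (1 - w) * c ^ 2 / (μ + w)) '' Icc 0 1) := by
      refine ⟨0, ?_⟩
      rintro b ⟨w, ⟨hw0, hw1⟩, rfl⟩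
      have hμw : (0:ℝ) < μ + w := by linarith
      have : 0 ≤ μ * (1 - w) * c ^ 2 / (μ + w) :=
        div_nonneg (mul_nonneg (mul_nonneg (by linarith) (by linarith)) hc2.le) hμw.le
      nlinarith
    refine le_min ?_ ?_
    · have h1 : (1:ℝ) ∈ Icc (0:ℝ) 1 := by simp
      have := csInf_le hbdd (mem_image_of_mem _ h1)
      simpa using this
    · have h0 : (0:ℝ) ∈ Icc (0:ℝ) 1 := by simp
      have := csInf_le hbdd (mem_image_of_mem _ h0)
      have hμ0 : μ ≠ 0 := by linarith
      simpa [hμ0] using this
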